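/- arXiv:2006.10974 — 3 statements merged into one kernel-verified Lean document; each statement's English description precedes it below -/
import Mathlib

section
/- Let F, Ftilde : ℝ^d → ℝ be differentiable, with F being μ-smooth (its gradient is μ-Lipschitz). Define Δ(w) = ∇Ftilde(w) − ∇F(w). Suppose at a point w, ‖∇Ftilde(w)‖ ≥ c·‖Δ(w)‖ for some c > 1, and let w' = w − η∇Ftilde(w) with step size η ≤ 2(1 − 1/c)/μ. Then F(w') ≤ F(w) − η(1 − 1/c − μη/2)·‖∇Ftilde(w)‖². -/
open scoped RealInnerProductSpace

lemma descent_lemma {d : ℕ} (F : EuclideanSpace ℝ (Fin d) → ℝ)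
    (hF : Differentiable ℝ F) (μ : ℝ) (hμ : 0 ≤ μ)
    (hsmooth : ∀ x y, ‖gradient F x - gradient F y‖ ≤ μ * ‖x - y‖)
    (x v : EuclideanSpace ℝ (Fin d)) :
    F (x + v) ≤ F x + ⟪gradient F x, v⟫ + μ / 2 * ‖v‖ ^ 2 := by
  set φ : ℝ → ℝ := fun t => F (x + t • v) - t * ⟪gradient F x, v⟫ - μ * t ^ 2 / 2 * ‖v‖ ^ 2 with hφdef
  have hder : ∀ t : ℝ, HasDerivAt φ
      (⟪gradient F (x + t • v), v⟫ - ⟪gradient F x, v⟫ - μ * t * ‖v‖ ^ 2) t := by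
    intro t
    have hline : HasDerivAt (fun t : ℝ => x + t • v) v t := by
      simpa using ((hasDerivAt_id t).smul_const v).const_add x
    have hfd := ((hF (x + t • v)).hasGradientAt.hasFDerivAt).comp_hasDerivAt t hline
    have h1 : HasDerivAt (fun t : ℝ => F (x + t • v)) ⟪gradient F (x + t • v), v⟫ t := by
      exact hfd
    have h2 : HasDerivAt (fun t : ℝ => t * ⟪gradient F x, v⟫) ⟪gradient F x, v⟫ t := by
      simpa using (hasDerivAt_id t).mul_const ⟪gradient F x, v⟫
    have h3 : HasDerivAt (fun t : ℝ => μ * t ^ 2 / 2 * ‖v‖ ^ 2) (μ * t * ‖v‖ ^ 2) t := by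
      have := ((hasDerivAt_pow 2 t).const_mul μ).div_const 2
      have h4 := this.mul_const (‖v‖ ^ 2)
      refine h4.congr_deriv ?_
      ring
    exact (h1.sub h2).sub h3
  have hcont : ContinuousOn φ (Set.Icc 0 1) := fun t _ => (hder t).continuousAt.continuousWithinAt
  have hdiff : DifferentiableOn ℝ φ (interior (Set.Icc (0:ℝ) 1)) :=
    fun t _ => (hder t).differentiableAt.differentiableWithinAt
  have hnonpos : ∀ t ∈ interior (Set.Icc (0:ℝ) 1), deriv φ t ≤ 0 := by
    intro t ht
    rw [interior_Icc, Set.mem_Ioo] at ht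
    rw [(hder t).deriv]
    have hinner : ⟪gradient F (x + t • v) - gradient F x, v⟫ ≤ μ * t * ‖v‖ ^ 2 := by
      calc ⟪gradient F (x + t • v) - gradient F x, v⟫
          ≤ ‖gradient F (x + t • v) - gradient F x‖ * ‖v‖ := real_inner_le_norm _ _
        _ ≤ (μ * ‖(x + t • v) - x‖) * ‖v‖ := by
            exact mul_le_mul_of_nonneg_right (hsmooth _ _) (norm_nonneg _)
        _ = μ * t * ‖v‖ ^ 2 := by
            simp [norm_smul, abs_of_pos ht.1]; ring
    rw [inner_sub_left] at hinner
    linarith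
  have hanti := antitoneOn_of_deriv_nonpos (convex_Icc (0:ℝ) 1) hcont hdiff hnonpos
  have := hanti (Set.left_mem_Icc.2 zero_le_one) (Set.right_mem_Icc.2 zero_le_one) zero_le_one
  simp only [hφdef, one_smul, zero_smul, add_zero, one_pow, mul_one, mul_zero,
    zero_mul, sub_zero, zero_pow, mul_div_assoc] at this
  linarith

theorem stmt_0 {d : ℕ} (F Ftilde : EuclideanSpace ℝ (Fin d) → ℝ)
    (hF : Differentiable ℝ F) (hFt : Differentiable ℝ Ftilde)
    (μ : ℝ) (hμ : 0 < μ)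
    (hsmooth : ∀ x y, ‖gradient F x - gradient F y‖ ≤ μ * ‖x - y‖)
    (Δ : EuclideanSpace ℝ (Fin d) → EuclideanSpace ℝ (Fin d))
    (hΔ : ∀ x, Δ x = gradient Ftilde x - gradient F x)
    (w : EuclideanSpace ℝ (Fin d)) (c : ℝ) (hc : 1 < c)
    (hgrad : ‖gradient Ftilde w‖ ≥ c * ‖Δ w‖)
    (η : ℝ) (hη0 : 0 < η) (hη : η ≤ 2 * (1 - 1 / c) / μ)
    (w' : EuclideanSpace ℝ (Fin d)) (hw' : w' = w - η • gradient Ftilde w) :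
    F w' ≤ F w - η * (1 - 1 / c - μ * η / 2) * ‖gradient Ftilde w‖ ^ 2 := by
  set g := gradient Ftilde w with hg
  have hw'' : w' = w + (-η) • g := by rw [hw']; module
  have hd := descent_lemma F hF μ hμ.le hsmooth w ((-η) • g)
  rw [← hw''] at hd
  have hgF : gradient F w = g - Δ w := by rw [hΔ]; abel
  have hΔle : ‖Δ w‖ ≤ ‖g‖ / c := by
    rw [le_div_iff₀ (by linarith)]; linarith [hgrad]
  have hinner : ⟪Δ w, g⟫ ≤ ‖g‖ ^ 2 / c := by
    calc ⟪Δ w, g⟫ ≤ ‖Δ w‖ * ‖g‖ := real_inner_le_norm _ _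
      _ ≤ (‖g‖ / c) * ‖g‖ := mul_le_mul_of_nonneg_right hΔle (norm_nonneg _)
      _ = ‖g‖ ^ 2 / c := by ring
  have e1 : ⟪gradient F w, (-η) • g⟫ = -η * ‖g‖ ^ 2 + η * ⟪Δ w, g⟫ := by
    rw [hgF, inner_smul_right, inner_sub_left, real_inner_self_eq_norm_sq]
    ring
  have e2 : ‖(-η) • g‖ ^ 2 = η ^ 2 * ‖g‖ ^ 2 := by
    rw [norm_smul]; simp [abs_of_pos hη0]; ring
  rw [e1, e2] at hd
  have hc0 : (0:ℝ) < c := by linarith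
  have : η * ⟪Δ w, g⟫ ≤ η * (‖g‖ ^ 2 / c) :=
    mul_le_mul_of_nonneg_left hinner hη0.le
  calc F w' ≤ F w + (-η * ‖g‖ ^ 2 + η * ⟪Δ w, g⟫) + μ / 2 * (η ^ 2 * ‖g‖ ^ 2) := hd
    _ ≤ F w + (-η * ‖g‖ ^ 2 + η * (‖g‖ ^ 2 / c)) + μ / 2 * (η ^ 2 * ‖g‖ ^ 2) := by linarith
    _ = F w - η * (1 - 1 / c - μ * η / 2) * ‖g‖ ^ 2 := by field_simp; ring
end

section
/- There exist functions F, Ftilde : [0,1] → ℝ and a point ŵ₁ = 0 — namely F(w) = (w−1)² + (ρ/6)w³ and Ftilde(w) = (w−1)² − (δ/4)w² for given δ, ρ > 0 — such that F(0) = Ftilde(0), F'(0) = Ftilde'(0), |F''(0) − Ftilde''(0)| = δ/2, F''' ≡ ρ, and for every w ∈ [0,1]: if |Ftilde'(w)| < (δ/2)·|w − 0| + (ρ/2)·(w − 0)², then Ftilde'(w)·F'(w) < 0. -/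
theorem stmt_3 (δ ρ : ℝ) (hδ : 0 < δ) (hρ : 0 < ρ) :
    ∃ F Ftilde : ℝ → ℝ,
      (∀ w, F w = (w - 1) ^ 2 + (ρ / 6) * w ^ 3) ∧
      (∀ w, Ftilde w = (w - 1) ^ 2 - (δ / 4) * w ^ 2) ∧
      F 0 = Ftilde 0 ∧
      deriv F 0 = deriv Ftilde 0 ∧
      |deriv (deriv F) 0 - deriv (deriv Ftilde) 0| = δ / 2 ∧
      (∀ w, deriv (deriv (deriv F)) w = ρ) ∧
      (∀ w ∈ Set.Icc (0 : ℝ) 1,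
        |deriv Ftilde w| < (δ / 2) * |w - 0| + (ρ / 2) * (w - 0) ^ 2 →
          deriv Ftilde w * deriv F w < 0) := by
  set F : ℝ → ℝ := fun w => (w - 1) ^ 2 + (ρ / 6) * w ^ 3 with hF
  set Ft : ℝ → ℝ := fun w => (w - 1) ^ 2 - (δ / 4) * w ^ 2 with hFt
  have hF' : deriv F = fun w => 2 * (w - 1) + (ρ / 2) * w ^ 2 := by
    funext w
    have h1 : HasDerivAt (fun w : ℝ => (w - 1) ^ 2) (2 * (w - 1)) w := by
      simpa using ((hasDerivAt_id w).sub_const 1).fun_pow 2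
    have h2 : HasDerivAt (fun w : ℝ => (ρ / 6) * w ^ 3) ((ρ / 2) * w ^ 2) w := by
      have := (hasDerivAt_pow 3 w).const_mul (ρ / 6)
      rw [show (ρ / 2) * w ^ 2 = ρ / 6 * ((3:ℕ) * w ^ (3 - 1)) by push_cast; ring]; exact this
    exact (h1.add h2).deriv
  have hFt' : deriv Ft = fun w => 2 * (w - 1) - (δ / 2) * w := by
    funext w
    have h1 : HasDerivAt (fun w : ℝ => (w - 1) ^ 2) (2 * (w - 1)) w := by
      simpa using ((hasDerivAt_id w).sub_const 1).fun_pow 2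
    have h2 : HasDerivAt (fun w : ℝ => (δ / 4) * w ^ 2) ((δ / 2) * w) w := by
      have := (hasDerivAt_pow 2 w).const_mul (δ / 4)
      rw [show (δ / 2) * w = δ / 4 * ((2:ℕ) * w ^ (2 - 1)) by push_cast; ring]; exact this
    exact (h1.sub h2).deriv
  have hF'' : deriv (deriv F) = fun w => 2 + ρ * w := by
    rw [hF']
    funext w
    have h1 : HasDerivAt (fun w : ℝ => 2 * (w - 1)) 2 w := by
      simpa using ((hasDerivAt_id w).sub_const 1).const_mul 2
    have h2 : HasDerivAt (fun w : ℝ => (ρ / 2) * w ^ 2) (ρ * w) w := by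
      have := (hasDerivAt_pow 2 w).const_mul (ρ / 2)
      rw [show ρ * w = ρ / 2 * ((2:ℕ) * w ^ (2 - 1)) by push_cast; ring]; exact this
    exact (h1.add h2).deriv
  have hFt'' : deriv (deriv Ft) = fun w => 2 - δ / 2 := by
    rw [hFt']
    funext w
    have h1 : HasDerivAt (fun w : ℝ => 2 * (w - 1)) 2 w := by
      simpa using ((hasDerivAt_id w).sub_const 1).const_mul 2
    have h2 : HasDerivAt (fun w : ℝ => (δ / 2) * w) (δ / 2) w := by
      simpa using (hasDerivAt_id w).const_mul (δ / 2)
    exact (h1.sub h2).deriv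
  have hF''' : deriv (deriv (deriv F)) = fun _ => ρ := by
    rw [hF'']
    funext w
    have h1 : HasDerivAt (fun w : ℝ => 2 + ρ * w) ρ w := by
      simpa using (((hasDerivAt_id w).const_mul ρ).const_add 2)
    exact h1.deriv
  refine ⟨F, Ft, fun _ => rfl, fun _ => rfl, ?_, ?_, ?_, ?_, ?_⟩
  · show (0-1:ℝ)^2 + ρ/6*0^3 = (0-1)^2 - δ/4*0^2; ring
  · rw [hF', hFt']; norm_num
  · rw [hF'', hFt'']
    simp only
    rw [show (2 + ρ * 0) - (2 - δ / 2) = δ / 2 by ring]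
    exact abs_of_pos (by linarith)
  · intro w; rw [hF''']
  · intro w hw habs
    rw [hF', hFt'] at *
    simp only at habs ⊢
    obtain ⟨hw0, hw1⟩ := hw
    rw [sub_zero] at habs
    rw [abs_of_nonneg hw0] at habs
    rw [abs_lt] at habs
    obtain ⟨hl, hr⟩ := habs
    have hFpos : 0 < 2 * (w - 1) + (ρ / 2) * w ^ 2 := by nlinarith
    have hFtneg : 2 * (w - 1) - (δ / 2) * w < 0 := by
      rcases lt_or_ge w 1 with h | h
      · nlinarith [mul_nonneg hδ.le hw0]
      · have hw : w = 1 := le_antisymm hw1 h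
        rw [hw]; linarith
    exact mul_neg_of_neg_of_pos hFtneg hFpos
end

section
/- Let F, G : ℝ^d → ℝ with F differentiable, F μ-smooth, G differentiable and μ-smooth, and suppose F₀ := F(w₀), F* := inf F > −∞, G₀ := G(w₀), G* := inf G > −∞. Define Δ(w) = ∇G(w) − ∇F(w) and suppose ‖Δ(w)‖ ≤ C + δ‖w − w₀‖ + 2ρ‖w − w₀‖² for all w, where C, δ, ρ ≥ 0. Run gradient descent w_t = w_{t−1} − (1/μ)∇G(w_{t−1}) for T steps. Then (1/T)Σ_{t=1}^T ‖∇F(w_{t−1})‖ ≤ √(2μ(F₀ − F*))/√T + √3·C + δ√((3/μ)(G₀ − G*))·√T + (4ρ/μ)(G₀ − G*)·T. -/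
open scoped RealInnerProductSpace

section aux

variable {E : Type*} [NormedAddCommGroup E] [InnerProductSpace ℝ E] [CompleteSpace E]

lemma my_descent (f : E → ℝ) (μ : ℝ) (hμ : 0 ≤ μ) (hdiff : Differentiable ℝ f)
    (hs : ∀ x y, ‖gradient f x - gradient f y‖ ≤ μ * ‖x - y‖) (x y : E) :
    f y ≤ f x + ⟪gradient f x, y - x⟫ + μ / 2 * ‖y - x‖ ^ 2 := by
  set v := y - x with hv
  have hgrad_cont : Continuous (gradient f) := by
    have : LipschitzWith (Real.toNNReal μ) (gradient f) :=
      LipschitzWith.of_dist_le_mul (fun a b => by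
        rw [dist_eq_norm, dist_eq_norm, Real.coe_toNNReal μ hμ]; exact hs a b)
    exact this.continuous
  have hline : ∀ t : ℝ, HasDerivAt (fun t : ℝ => x + t • v) v t := by
    intro t
    simpa using ((hasDerivAt_id t).smul_const v).const_add x
  have hinner : ∀ z : E, (fderiv ℝ f z) v = ⟪gradient f z, v⟫ := by
    intro z
    rw [gradient, InnerProductSpace.toDual_symm_apply]
  have hφ : ∀ t : ℝ, HasDerivAt (fun t : ℝ => f (x + t • v)) ⟪gradient f (x + t • v), v⟫ t := by
    intro t
    have h1 := ((hdiff (x + t • v)).hasFDerivAt).comp_hasDerivAt t (hline t)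
    rwa [hinner] at h1
  have hcont : Continuous fun t : ℝ => ⟪gradient f (x + t • v), v⟫ :=
    Continuous.inner (hgrad_cont.comp (by continuity)) continuous_const
  have hftc : ∫ t in (0:ℝ)..1, ⟪gradient f (x + t • v), v⟫ = f y - f x := by
    rw [intervalIntegral.integral_eq_sub_of_hasDerivAt (fun t _ => hφ t)
      (hcont.intervalIntegrable 0 1)]
    norm_num [hv]
  have hmono : ∫ t in (0:ℝ)..1, ⟪gradient f (x + t • v), v⟫ ≤
      ∫ t in (0:ℝ)..1, (⟪gradient f x, v⟫ + t * (μ * ‖v‖ ^ 2)) := by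
    apply intervalIntegral.integral_mono_on zero_le_one (hcont.intervalIntegrable 0 1)
      ((Continuous.intervalIntegrable (by continuity) 0 1))
    intro t ht
    have h1 : ⟪gradient f (x + t • v) - gradient f x, v⟫ ≤
        ‖gradient f (x + t • v) - gradient f x‖ * ‖v‖ := real_inner_le_norm _ _
    have h2 : ‖gradient f (x + t • v) - gradient f x‖ ≤ μ * ‖t • v‖ := by
      simpa using hs (x + t • v) x
    have h3 : ‖t • v‖ = t * ‖v‖ := by
      rw [norm_smul, Real.norm_eq_abs, abs_of_nonneg ht.1]
    have h4 : ⟪gradient f (x + t • v) - gradient f x, v⟫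
        = ⟪gradient f (x + t • v), v⟫ - ⟪gradient f x, v⟫ := inner_sub_left _ _ _
    have hvnn : (0:ℝ) ≤ ‖v‖ := norm_nonneg _
    rw [h3] at h2
    nlinarith [mul_le_mul_of_nonneg_right h2 hvnn]
  have hrhs : ∫ t in (0:ℝ)..1, (⟪gradient f x, v⟫ + t * (μ * ‖v‖ ^ 2))
      = ⟪gradient f x, v⟫ + μ / 2 * ‖v‖ ^ 2 := by
    rw [intervalIntegral.integral_add (intervalIntegrable_const)
      ((intervalIntegral.intervalIntegrable_id).mul_const _)]
    simp [integral_id]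
    ring
  linarith [hftc ▸ hmono, hrhs ▸ hmono]

lemma tele_sum (H : ℕ → ℝ) (c : ℕ → ℝ) (h : ∀ t, H (t + 1) ≤ H t - c t) (n : ℕ) :
    ∑ t ∈ Finset.range n, c t ≤ H 0 - H n := by
  induction n with
  | zero => simp
  | succ n ih => rw [Finset.sum_range_succ]; have := h n; linarith

lemma sum_id_le' (T : ℕ) : ∑ t ∈ Finset.range T, (t : ℝ) ≤ (T : ℝ) ^ 2 / 2 := by
  induction T with
  | zero => simp
  | succ n ih =>
    rw [Finset.sum_range_succ]
    push_cast
    nlinarith [ih]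

lemma sum_sq_le' (T : ℕ) : ∑ t ∈ Finset.range T, (t : ℝ) ^ 2 ≤ (T : ℝ) ^ 3 / 3 := by
  induction T with
  | zero => simp
  | succ n ih =>
    rw [Finset.sum_range_succ]
    push_cast
    nlinarith [ih, sq_nonneg (n : ℝ), (by exact_mod_cast Nat.zero_le n : (0:ℝ) ≤ n)]

lemma three_sq_le (u x y : ℝ) : (u + x + y) ^ 2 ≤ 3 * u ^ 2 + 3 * x ^ 2 + 3 * y ^ 2 := by
  nlinarith [sq_nonneg (u - x), sq_nonneg (u - y), sq_nonneg (x - y)]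

lemma sqrt_add_le2 {a b : ℝ} (ha : 0 ≤ a) (hb : 0 ≤ b) :
    Real.sqrt (a + b) ≤ Real.sqrt a + Real.sqrt b := by
  have h : a + b ≤ (Real.sqrt a + Real.sqrt b) ^ 2 := by
    nlinarith [Real.sq_sqrt ha, Real.sq_sqrt hb, Real.sqrt_nonneg a, Real.sqrt_nonneg b,
      mul_nonneg (Real.sqrt_nonneg a) (Real.sqrt_nonneg b)]
  calc Real.sqrt (a + b) ≤ Real.sqrt ((Real.sqrt a + Real.sqrt b) ^ 2) := Real.sqrt_le_sqrt h
    _ = Real.sqrt a + Real.sqrt b := Real.sqrt_sq (by positivity)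

lemma sqrt_add_le4 {a b c d : ℝ} (ha : 0 ≤ a) (hb : 0 ≤ b) (hc : 0 ≤ c) (hd : 0 ≤ d) :
    Real.sqrt (a + b + c + d) ≤ Real.sqrt a + Real.sqrt b + Real.sqrt c + Real.sqrt d := by
  calc Real.sqrt (a + b + c + d) ≤ Real.sqrt (a + b + c) + Real.sqrt d :=
        sqrt_add_le2 (by positivity) hd
    _ ≤ (Real.sqrt (a + b) + Real.sqrt c) + Real.sqrt d := by
        have := sqrt_add_le2 (a := a + b) (b := c) (by positivity) hc
        linarith
    _ ≤ Real.sqrt a + Real.sqrt b + Real.sqrt c + Real.sqrt d := by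
        have := sqrt_add_le2 ha hb
        linarith

end aux

set_option maxHeartbeats 1000000 in
theorem stmt_8 {d : ℕ} (F G : EuclideanSpace ℝ (Fin d) → ℝ)
    (μ : ℝ) (hμ : 0 < μ)
    (hFdiff : Differentiable ℝ F) (hGdiff : Differentiable ℝ G)
    (hFsmooth : ∀ x y, ‖gradient F x - gradient F y‖ ≤ μ * ‖x - y‖)
    (hGsmooth : ∀ x y, ‖gradient G x - gradient G y‖ ≤ μ * ‖x - y‖)
    (hFbdd : BddBelow (Set.range F)) (hGbdd : BddBelow (Set.range G))
    (C δ ρ : ℝ) (hC : 0 ≤ C) (hδ : 0 ≤ δ) (hρ : 0 ≤ ρ)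
    (w : ℕ → EuclideanSpace ℝ (Fin d))
    (hΔ : ∀ x, ‖gradient G x - gradient F x‖ ≤ C + δ * ‖x - w 0‖ + 2 * ρ * ‖x - w 0‖ ^ 2)
    (hstep : ∀ t : ℕ, w (t + 1) = w t - (1 / μ) • gradient G (w t))
    (T : ℕ) (hT : 1 ≤ T) :
    (1 / (T : ℝ)) * ∑ t ∈ Finset.range T, ‖gradient F (w t)‖ ≤
      Real.sqrt (2 * μ * (F (w 0) - ⨅ x, F x)) / Real.sqrt T
        + Real.sqrt 3 * C
        + δ * Real.sqrt ((3 / μ) * (G (w 0) - ⨅ x, G x)) * Real.sqrt T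
        + (4 * ρ / μ) * (G (w 0) - ⨅ x, G x) * T := by
  have hμ' : μ ≠ 0 := ne_of_gt hμ
  set Fs := ⨅ x, F x with hFsdef
  set Gs := ⨅ x, G x with hGsdef
  have hFlow : ∀ y, Fs ≤ F y := fun y => ciInf_le hFbdd y
  have hGlow : ∀ y, Gs ≤ G y := fun y => ciInf_le hGbdd y
  set GD := G (w 0) - Gs with hGDdef
  set FD := F (w 0) - Fs with hFDdef
  have hGD0 : 0 ≤ GD := sub_nonneg.mpr (hGlow (w 0))
  have hFD0 : 0 ≤ FD := sub_nonneg.mpr (hFlow (w 0))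
  clear_value Fs Gs
  clear_value GD FD
  have hstep' : ∀ t : ℕ, w (t + 1) - w t = -((1 / μ) • gradient G (w t)) := by
    intro t; rw [hstep t, sub_sub_cancel_left]
  -- descent for G
  have hGdesc : ∀ t : ℕ, G (w (t + 1)) ≤ G (w t) - 1 / (2 * μ) * ‖gradient G (w t)‖ ^ 2 := by
    intro t
    have h := my_descent G μ hμ.le hGdiff hGsmooth (w t) (w (t + 1))
    rw [hstep' t] at h
    have h1 : ⟪gradient G (w t), -((1 / μ) • gradient G (w t))⟫
        = -(1 / μ) * ‖gradient G (w t)‖ ^ 2 := by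
      rw [inner_neg_right, real_inner_smul_right, real_inner_self_eq_norm_sq]; ring
    have h2 : ‖-((1 / μ) • gradient G (w t))‖ ^ 2 = (1 / μ) ^ 2 * ‖gradient G (w t)‖ ^ 2 := by
      rw [norm_neg, norm_smul, Real.norm_eq_abs, abs_of_pos (by positivity : (0:ℝ) < 1 / μ)]
      ring
    rw [h1, h2] at h
    have h3 : -(1 / μ) * ‖gradient G (w t)‖ ^ 2
        + μ / 2 * ((1 / μ) ^ 2 * ‖gradient G (w t)‖ ^ 2)
        = -(1 / (2 * μ)) * ‖gradient G (w t)‖ ^ 2 := by field_simp; ring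
    linarith
  -- descent for F
  have hFdesc : ∀ t : ℕ, F (w (t + 1)) ≤ F (w t) - 1 / (2 * μ) * ‖gradient F (w t)‖ ^ 2
      + 1 / (2 * μ) * ‖gradient G (w t) - gradient F (w t)‖ ^ 2 := by
    intro t
    have h := my_descent F μ hμ.le hFdiff hFsmooth (w t) (w (t + 1))
    rw [hstep' t] at h
    set f := gradient F (w t) with hf
    set g := gradient G (w t) with hg
    have h1 : ⟪f, -((1 / μ) • g)⟫ = -(1 / μ) * ⟪f, g⟫ := by
      rw [inner_neg_right, real_inner_smul_right]; ring
    have h2 : ‖-((1 / μ) • g)‖ ^ 2 = (1 / μ) ^ 2 * ‖g‖ ^ 2 := by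
      rw [norm_neg, norm_smul, Real.norm_eq_abs, abs_of_pos (by positivity : (0:ℝ) < 1 / μ)]
      ring
    have h3 : ‖g - f‖ ^ 2 = ‖g‖ ^ 2 - 2 * ⟪f, g⟫ + ‖f‖ ^ 2 := by
      rw [norm_sub_sq_real, real_inner_comm]
    rw [h1, h2] at h
    have h4 : -(1 / μ) * ⟪f, g⟫ + μ / 2 * ((1 / μ) ^ 2 * ‖g‖ ^ 2)
        = -(1 / (2 * μ)) * ‖f‖ ^ 2 + 1 / (2 * μ) * ‖g - f‖ ^ 2 := by
      rw [h3]; field_simp; ring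
    linarith
  -- telescoped sums
  have hGsum : ∀ n : ℕ, ∑ t ∈ Finset.range n, ‖gradient G (w t)‖ ^ 2 ≤ 2 * μ * GD := by
    intro n
    have h := tele_sum (fun n => G (w n)) (fun t => 1 / (2 * μ) * ‖gradient G (w t)‖ ^ 2)
      (fun t => by have := hGdesc t; simpa using this) n
    have h2 : G (w 0) - G (w n) ≤ GD := by have := hGlow (w n); rw [hGDdef]; linarith
    rw [← Finset.mul_sum] at h
    have h4 := mul_le_mul_of_nonneg_left (h.trans h2) (by positivity : (0:ℝ) ≤ 2 * μ)
    have h5 : 2 * μ * (1 / (2 * μ) * ∑ t ∈ Finset.range n, ‖gradient G (w t)‖ ^ 2)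
        = ∑ t ∈ Finset.range n, ‖gradient G (w t)‖ ^ 2 := by field_simp
    linarith
  have hFsum : ∑ t ∈ Finset.range T, ‖gradient F (w t)‖ ^ 2 ≤ 2 * μ * FD
      + ∑ t ∈ Finset.range T, ‖gradient G (w t) - gradient F (w t)‖ ^ 2 := by
    have h := tele_sum (fun n => F (w n))
      (fun t => 1 / (2 * μ) * ‖gradient F (w t)‖ ^ 2
        - 1 / (2 * μ) * ‖gradient G (w t) - gradient F (w t)‖ ^ 2)
      (fun t => by have := hFdesc t; linarith) T
    rw [Finset.sum_sub_distrib, ← Finset.mul_sum, ← Finset.mul_sum] at h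
    have h2 : F (w 0) - F (w T) ≤ FD := by have := hFlow (w T); rw [hFDdef]; linarith
    have h4 := mul_le_mul_of_nonneg_left (h.trans h2) (by positivity : (0:ℝ) ≤ 2 * μ)
    have h5 : 2 * μ * (1 / (2 * μ) * ∑ t ∈ Finset.range T, ‖gradient F (w t)‖ ^ 2
          - 1 / (2 * μ) * ∑ t ∈ Finset.range T, ‖gradient G (w t) - gradient F (w t)‖ ^ 2)
        = ∑ t ∈ Finset.range T, ‖gradient F (w t)‖ ^ 2
          - ∑ t ∈ Finset.range T, ‖gradient G (w t) - gradient F (w t)‖ ^ 2 := by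
      field_simp
    linarith
  -- distance bound
  have hr : ∀ t : ℕ, ‖w t - w 0‖ ^ 2 ≤ 2 / μ * GD * t := by
    intro t
    have h0 : w t - w 0 = ∑ s ∈ Finset.range t, (w (s + 1) - w s) :=
      (Finset.sum_range_sub w t).symm
    have h1 : ‖w t - w 0‖ ≤ (1 / μ) * ∑ s ∈ Finset.range t, ‖gradient G (w s)‖ := by
      rw [h0]
      calc ‖∑ s ∈ Finset.range t, (w (s + 1) - w s)‖
          ≤ ∑ s ∈ Finset.range t, ‖w (s + 1) - w s‖ := norm_sum_le _ _
        _ = ∑ s ∈ Finset.range t, (1 / μ) * ‖gradient G (w s)‖ := by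
            apply Finset.sum_congr rfl
            intro s _
            rw [hstep' s, norm_neg, norm_smul, Real.norm_eq_abs,
              abs_of_pos (by positivity : (0:ℝ) < 1 / μ)]
        _ = (1 / μ) * ∑ s ∈ Finset.range t, ‖gradient G (w s)‖ := by rw [Finset.mul_sum]
    set S := ∑ s ∈ Finset.range t, ‖gradient G (w s)‖ with hSdef
    have hS0 : 0 ≤ S := by positivity
    have h2 : S ^ 2 ≤ t * ∑ s ∈ Finset.range t, ‖gradient G (w s)‖ ^ 2 := by
      have := sq_sum_le_card_mul_sum_sq (s := Finset.range t)
        (f := fun s => ‖gradient G (w s)‖)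
      simpa using this
    have h3 := hGsum t
    have h4 : ‖w t - w 0‖ ^ 2 ≤ ((1 / μ) * S) ^ 2 := pow_le_pow_left₀ (norm_nonneg _) h1 2
    have h5 : S ^ 2 ≤ (t : ℝ) * (2 * μ * GD) :=
      h2.trans (mul_le_mul_of_nonneg_left h3 (Nat.cast_nonneg t))
    have h6 : ((1 / μ) * S) ^ 2 = (1 / μ) ^ 2 * S ^ 2 := by ring
    have h7 : (1 / μ) ^ 2 * ((t : ℝ) * (2 * μ * GD)) = 2 / μ * GD * t := by
      field_simp
    have h8 := mul_le_mul_of_nonneg_left h5 (by positivity : (0:ℝ) ≤ (1 / μ) ^ 2)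
    linarith [h4, h8, h6.le, h6.ge, h7.le, h7.ge]
  -- delta bound pointwise
  set a := 2 / μ * GD with hadef
  have ha0 : 0 ≤ a := by rw [hadef]; positivity
  clear_value a
  have hΔ2 : ∀ t : ℕ, ‖gradient G (w t) - gradient F (w t)‖ ^ 2
      ≤ 3 * C ^ 2 + 3 * δ ^ 2 * a * t + 12 * ρ ^ 2 * a ^ 2 * (t : ℝ) ^ 2 := by
    intro t
    have h1 := hΔ (w t)
    have h2 := hr t
    set r := ‖w t - w 0‖ with hrdef
    have hr0 : 0 ≤ r := norm_nonneg _
    have hX0 : (0:ℝ) ≤ a * t := by positivity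
    have hb : ‖gradient G (w t) - gradient F (w t)‖ ^ 2 ≤ (C + δ * r + 2 * ρ * r ^ 2) ^ 2 :=
      pow_le_pow_left₀ (norm_nonneg _) h1 2
    have h2' : r ^ 2 ≤ a * (t : ℝ) := h2
    have h4 : r ^ 2 * r ^ 2 ≤ (a * t) * (a * t) := mul_le_mul h2' h2' (sq_nonneg r) hX0
    have h5 : (C + δ * r + 2 * ρ * r ^ 2) ^ 2
        ≤ 3 * C ^ 2 + 3 * (δ * r) ^ 2 + 3 * (2 * ρ * r ^ 2) ^ 2 := three_sq_le _ _ _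
    have h6 := mul_le_mul_of_nonneg_left h2' (by positivity : (0:ℝ) ≤ 3 * δ ^ 2)
    have h7 := mul_le_mul_of_nonneg_left h4 (by positivity : (0:ℝ) ≤ 12 * ρ ^ 2)
    linarith [hb, h5, h6, h7]
  -- sum of delta bound
  have hΔsum : ∑ t ∈ Finset.range T, ‖gradient G (w t) - gradient F (w t)‖ ^ 2
      ≤ 3 * C ^ 2 * T + 3 * δ ^ 2 * a * ((T : ℝ) ^ 2 / 2)
        + 12 * ρ ^ 2 * a ^ 2 * ((T : ℝ) ^ 3 / 3) := by
    calc ∑ t ∈ Finset.range T, ‖gradient G (w t) - gradient F (w t)‖ ^ 2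
        ≤ ∑ t ∈ Finset.range T,
            (3 * C ^ 2 + 3 * δ ^ 2 * a * t + 12 * ρ ^ 2 * a ^ 2 * (t : ℝ) ^ 2) :=
          Finset.sum_le_sum (fun t _ => hΔ2 t)
      _ = 3 * C ^ 2 * T + 3 * δ ^ 2 * a * (∑ t ∈ Finset.range T, (t : ℝ))
          + 12 * ρ ^ 2 * a ^ 2 * (∑ t ∈ Finset.range T, (t : ℝ) ^ 2) := by
          rw [Finset.sum_add_distrib, Finset.sum_add_distrib, ← Finset.mul_sum, ← Finset.mul_sum,
            ← Finset.mul_sum, Finset.sum_const, Finset.card_range, nsmul_eq_mul]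
          ring
      _ ≤ 3 * C ^ 2 * T + 3 * δ ^ 2 * a * ((T : ℝ) ^ 2 / 2)
          + 12 * ρ ^ 2 * a ^ 2 * ((T : ℝ) ^ 3 / 3) := by
          have h1 := sum_id_le' T
          have h2 := sum_sq_le' T
          have c1 : (0:ℝ) ≤ 3 * δ ^ 2 * a := by positivity
          have c2 : (0:ℝ) ≤ 12 * ρ ^ 2 * a ^ 2 := by positivity
          linarith [mul_le_mul_of_nonneg_left h1 c1, mul_le_mul_of_nonneg_left h2 c2]
  -- assemble
  set m1 := 2 * μ * FD with hm1
  set m2 := 3 * C ^ 2 * (T : ℝ) with hm2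
  set m3 := 3 * δ ^ 2 * a * ((T : ℝ) ^ 2 / 2) with hm3
  set m4 := 12 * ρ ^ 2 * a ^ 2 * ((T : ℝ) ^ 3 / 3) with hm4
  have hm10 : 0 ≤ m1 := by rw [hm1]; positivity
  have hm20 : 0 ≤ m2 := by rw [hm2]; positivity
  have hm30 : 0 ≤ m3 := by rw [hm3]; positivity
  have hm40 : 0 ≤ m4 := by rw [hm4]; positivity
  have hM : ∑ t ∈ Finset.range T, ‖gradient F (w t)‖ ^ 2 ≤ m1 + m2 + m3 + m4 := by
    linarith [hFsum, hΔsum]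
  set S := ∑ t ∈ Finset.range T, ‖gradient F (w t)‖ with hSdef
  have hS0 : 0 ≤ S := by positivity
  have hCS : S ^ 2 ≤ (T : ℝ) * (m1 + m2 + m3 + m4) := by
    have h2 : S ^ 2 ≤ (T : ℝ) * ∑ t ∈ Finset.range T, ‖gradient F (w t)‖ ^ 2 := by
      have := sq_sum_le_card_mul_sum_sq (s := Finset.range T)
        (f := fun t => ‖gradient F (w t)‖)
      simpa using this
    exact h2.trans (mul_le_mul_of_nonneg_left hM (Nat.cast_nonneg T))
  have hT0 : (0:ℝ) < T := by exact_mod_cast Nat.lt_of_lt_of_le Nat.zero_lt_one hT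
  set sT := Real.sqrt (T : ℝ) with hsTdef
  have hsT0 : 0 < sT := Real.sqrt_pos.mpr hT0
  have hsT2 : sT ^ 2 = (T : ℝ) := Real.sq_sqrt (le_of_lt hT0)
  have hle : S ≤ Real.sqrt ((T : ℝ) * (m1 + m2 + m3 + m4)) := by
    rw [show S = Real.sqrt (S ^ 2) from (Real.sqrt_sq hS0).symm]
    exact Real.sqrt_le_sqrt hCS
  have hsplit : Real.sqrt ((T : ℝ) * (m1 + m2 + m3 + m4))
      = sT * Real.sqrt (m1 + m2 + m3 + m4) := Real.sqrt_mul (le_of_lt hT0) _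
  have hsum4 : Real.sqrt (m1 + m2 + m3 + m4)
      ≤ Real.sqrt m1 + Real.sqrt m2 + Real.sqrt m3 + Real.sqrt m4 :=
    sqrt_add_le4 hm10 hm20 hm30 hm40
  have he2 : Real.sqrt m2 = Real.sqrt 3 * C * sT := by
    rw [show m2 = (Real.sqrt 3 * C * sT) ^ 2 by
      rw [mul_pow, mul_pow, Real.sq_sqrt (by norm_num : (0:ℝ) ≤ 3), hsT2, hm2]]
    exact Real.sqrt_sq (by positivity)
  have he3 : Real.sqrt m3 = δ * Real.sqrt (3 / μ * GD) * (T : ℝ) := by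
    rw [show m3 = (δ * Real.sqrt (3 / μ * GD) * (T : ℝ)) ^ 2 by
      rw [mul_pow, mul_pow, Real.sq_sqrt (by positivity : (0:ℝ) ≤ 3 / μ * GD), hm3, hadef]
      field_simp]
    exact Real.sqrt_sq (by positivity)
  have he4 : Real.sqrt m4 = (4 * ρ / μ) * GD * (T : ℝ) * sT := by
    rw [show m4 = ((4 * ρ / μ) * GD * (T : ℝ) * sT) ^ 2 by
      rw [mul_pow, mul_pow, mul_pow, hsT2, hm4, hadef]
      field_simp
      ring]
    exact Real.sqrt_sq (by positivity)
  have hfinal : S ≤ sT * (Real.sqrt m1 + Real.sqrt 3 * C * sT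
      + δ * Real.sqrt (3 / μ * GD) * (T : ℝ) + (4 * ρ / μ) * GD * (T : ℝ) * sT) := by
    rw [← he2, ← he3, ← he4]
    calc S ≤ Real.sqrt ((T : ℝ) * (m1 + m2 + m3 + m4)) := hle
      _ = sT * Real.sqrt (m1 + m2 + m3 + m4) := hsplit
      _ ≤ sT * (Real.sqrt m1 + Real.sqrt m2 + Real.sqrt m3 + Real.sqrt m4) :=
          mul_le_mul_of_nonneg_left hsum4 (le_of_lt hsT0)
  have heq : (Real.sqrt m1 / sT + Real.sqrt 3 * C + δ * Real.sqrt (3 / μ * GD) * sT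
      + (4 * ρ / μ) * GD * (T : ℝ)) * (T : ℝ)
      = sT * (Real.sqrt m1 + Real.sqrt 3 * C * sT
        + δ * Real.sqrt (3 / μ * GD) * (T : ℝ) + (4 * ρ / μ) * GD * (T : ℝ) * sT) := by
    rw [show (T : ℝ) = sT * sT by rw [← hsT2]; ring]
    field_simp
  have hgoal : (1 / (T : ℝ)) * S ≤ Real.sqrt m1 / sT + Real.sqrt 3 * C
      + δ * Real.sqrt (3 / μ * GD) * sT + (4 * ρ / μ) * GD * (T : ℝ) := by
    rw [show (1 / (T : ℝ)) * S = S / (T : ℝ) by ring, div_le_iff₀ hT0, heq]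
    exact hfinal
  exact hgoal
end
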